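/- arXiv:2209.11999 — 2 statements merged into one kernel-verified Lean document; each statement's English description precedes it below -/
import Mathlib

section
/- If ‖x‖_Q = 0 for x ∈ ℝ^N, then x = 0; i.e., d·λ_max(S_x) = ‖x‖₁ implies S_x is a scalar multiple c·I of the identity, and evaluating on the vector |i j j … j⟩ (with i ≠ j) forces c = 0 and hence x = 0. -/
noncomputable section

/-- The projector `ω_{(0,k)} ⊗ I^{⊗(N-1)}` onto the unnormalized maximally
entangled state between tensor factors `0` and `k` of `(ℂ^d)^{⊗(N+1)}`. -/
def omegaI (d N : ℕ) (i : Fin N) :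
    Matrix ((Fin (N + 1)) → Fin d) ((Fin (N + 1)) → Fin d) ℝ :=
  Matrix.of fun v w =>
    if v 0 = v i.succ ∧ w 0 = w i.succ ∧ ∀ k, k ≠ 0 → k ≠ i.succ → v k = w k
    then 1 else 0

/-- `S_x = ∑ₖ |xₖ| · ω_{(0,k)} ⊗ I^{⊗(N-1)}`. -/
def Smat (d N : ℕ) (x : Fin N → ℝ) :
    Matrix ((Fin (N + 1)) → Fin d) ((Fin (N + 1)) → Fin d) ℝ :=
  ∑ i, |x i| • omegaI d N i

/-- The largest eigenvalue `λ_max(S_x)`. -/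
def lamMax (d N : ℕ) (x : Fin N → ℝ) : ℝ :=
  sSup (spectrum ℝ (Smat d N x))

/-- The `𝒬`-quantity `‖x‖_Q = (d·λ_max(S_x) - ‖x‖₁)/(d²-1)`. -/
def Qnorm (d N : ℕ) (x : Fin N → ℝ) : ℝ :=
  ((d : ℝ) * lamMax d N x - ∑ i, |x i|) / ((d : ℝ) ^ 2 - 1)

open Matrix in
lemma rayleigh_le {n : Type*} [Fintype n] [DecidableEq n] {A : Matrix n n ℝ}
    (hA : A.IsHermitian) (ψ : n → ℝ) :
    ψ ⬝ᵥ (A *ᵥ ψ) ≤ sSup (spectrum ℝ A) * (ψ ⬝ᵥ ψ) := by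
  set L := sSup (spectrum ℝ A) with hL
  have hbdd : BddAbove (spectrum ℝ A) := (A.finite_spectrum).bddAbove
  have hle : ∀ i, hA.eigenvalues i ≤ L := fun i =>
    le_csSup hbdd (hA.eigenvalues_mem_spectrum_real i)
  set U : Matrix n n ℝ := (hA.eigenvectorUnitary : Matrix n n ℝ) with hU
  have hUstar : (star U : Matrix n n ℝ) = Uᵀ := conjTranspose_eq_transpose_of_trivial _
  have hUU : U * star U = 1 := mem_unitaryGroup_iff.mp hA.eigenvectorUnitary.2
  set c : n → ℝ := Uᵀ *ᵥ ψ with hc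
  have hdiag : Matrix.diagonal (RCLike.ofReal ∘ hA.eigenvalues) = Matrix.diagonal hA.eigenvalues := by
    congr 1
  have h1 : ψ ⬝ᵥ (A *ᵥ ψ) = ∑ i, hA.eigenvalues i * (c i)^2 := by
    conv_lhs => rw [hA.spectral_theorem]
    rw [hdiag, Unitary.conjStarAlgAut_apply, hUstar, ← mulVec_mulVec, ← mulVec_mulVec, dotProduct_mulVec, ← mulVec_transpose]
    simp only [← hc, mulVec_diagonal, dotProduct]
    exact Finset.sum_congr rfl fun i _ => by ring
  have h2 : ψ ⬝ᵥ ψ = ∑ i, (c i)^2 := by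
    have : c ⬝ᵥ c = ψ ⬝ᵥ ψ := by
      rw [hc, dotProduct_mulVec, ← mulVec_transpose, transpose_transpose, mulVec_mulVec, ← hUstar,
        hUU, one_mulVec, dotProduct_comm]
    rw [← this, dotProduct]
    exact Finset.sum_congr rfl fun i _ => by ring
  rw [h1, h2, Finset.mul_sum]
  exact Finset.sum_le_sum fun i _ => mul_le_mul_of_nonneg_right (hle i) (sq_nonneg _)

def pat (d N : ℕ) [NeZero d] (k : Fin N) (m : Fin d) : Fin (N + 1) → Fin d :=
  fun j => if j = 0 ∨ j = k.succ then m else 0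

section
variable {d N : ℕ} [NeZero d] {k : Fin N}

lemma pat_zero (m : Fin d) : pat d N k m 0 = m := by simp [pat]

lemma pat_succ_self (m : Fin d) : pat d N k m k.succ = m := by simp [pat]

lemma pat_other {j : Fin (N + 1)} (h0 : j ≠ 0) (hk : j ≠ k.succ) (m : Fin d) :
    pat d N k m j = 0 := by simp [pat, h0, hk]

lemma pat_injective : Function.Injective (pat d N k) := fun m m' h => by
  have := congrFun h 0
  rwa [pat_zero, pat_zero] at this

lemma key_sum (f : ((Fin (N + 1)) → Fin d) → ℝ) :
    ∑ v : (Fin (N + 1)) → Fin d,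
      (if v 0 = v k.succ ∧ ∀ j, j ≠ 0 → j ≠ k.succ → v j = 0 then (1:ℝ) else 0) * f v
      = ∑ m : Fin d, f (pat d N k m) := by
  classical
  have h1 : ∀ v : (Fin (N + 1)) → Fin d,
      (if v 0 = v k.succ ∧ ∀ j, j ≠ 0 → j ≠ k.succ → v j = 0 then (1:ℝ) else 0) * f v
      = if v 0 = v k.succ ∧ ∀ j, j ≠ 0 → j ≠ k.succ → v j = 0 then f v else 0 := fun v => by
    split <;> simp
  rw [Finset.sum_congr rfl fun v _ => h1 v, ← Finset.sum_filter]
  have himg : Finset.univ.filter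
      (fun v : (Fin (N + 1)) → Fin d => v 0 = v k.succ ∧ ∀ j, j ≠ 0 → j ≠ k.succ → v j = 0)
      = Finset.image (pat d N k) Finset.univ := by
    ext v
    simp only [Finset.mem_filter, Finset.mem_univ, true_and, Finset.mem_image]
    constructor
    · rintro ⟨hv1, hv2⟩
      refine ⟨v 0, funext fun j => ?_⟩
      by_cases hj0 : j = 0
      · subst hj0; rw [pat_zero]
      by_cases hjk : j = k.succ
      · subst hjk; rw [pat_succ_self]; exact hv1
      · rw [pat_other hj0 hjk]; exact (hv2 j hj0 hjk).symm
    · rintro ⟨m, rfl⟩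
      exact ⟨by rw [pat_zero, pat_succ_self], fun j h0 hk' => pat_other h0 hk' m⟩
  rw [himg, Finset.sum_image fun m _ m' _ h => pat_injective h]

lemma omega_pat_self (m m' : Fin d) :
    omegaI d N k (pat d N k m) (pat d N k m') = 1 := by
  rw [omegaI, Matrix.of_apply, if_pos]
  exact ⟨by rw [pat_zero, pat_succ_self], by rw [pat_zero, pat_succ_self],
    fun j h0 hk' => by rw [pat_other h0 hk', pat_other h0 hk']⟩

lemma omega_pat_ne {l : Fin N} (hlk : l ≠ k) (m m' : Fin d) :
    omegaI d N l (pat d N k m) (pat d N k m')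
      = if m = 0 ∧ m' = 0 then 1 else 0 := by
  have hs0 : l.succ ≠ 0 := Fin.succ_ne_zero l
  have hsk : l.succ ≠ k.succ := fun hh => hlk (Fin.succ_injective _ hh)
  rw [omegaI, Matrix.of_apply]
  apply if_congr _ rfl rfl
  rw [pat_zero, pat_other hs0 hsk, pat_zero, pat_other hs0 hsk]
  constructor
  · rintro ⟨h1, h2, _⟩; exact ⟨h1, h2⟩
  · rintro ⟨rfl, rfl⟩
    exact ⟨rfl, rfl, fun j _ _ => rfl⟩

end


set_option linter.unusedVariables false in
open Matrix in
theorem stmt_12 (d N : ℕ) (hd : 2 ≤ d) (hN : 1 ≤ N)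
    (x : Fin N → ℝ) (h : Qnorm d N x = 0) :
    x = 0 := by
  classical
  haveI : NeZero d := ⟨by omega⟩
  have hd2 : (2:ℝ) ≤ (d:ℝ) := by exact_mod_cast hd
  have hdenpos : (0:ℝ) < (d:ℝ)^2 - 1 := by nlinarith
  have hnum : (d : ℝ) * lamMax d N x = ∑ i, |x i| := by
    rw [Qnorm, div_eq_zero_iff] at h
    rcases h with h | h
    · linarith [h]
    · linarith
  have herm : (Smat d N x).IsHermitian := by
    show Matrix.conjTranspose (Smat d N x) = Smat d N x
    ext v w
    simp only [Smat, Matrix.conjTranspose_apply, Matrix.sum_apply, Matrix.smul_apply,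
      smul_eq_mul, star_sum, star_mul', star_trivial]
    refine Finset.sum_congr rfl fun i _ => ?_
    congr 1
    rw [omegaI, Matrix.of_apply, Matrix.of_apply]
    apply if_congr _ rfl rfl
    constructor
    · rintro ⟨a, b, c⟩; exact ⟨b, a, fun j h1 h2 => (c j h1 h2).symm⟩
    · rintro ⟨a, b, c⟩; exact ⟨b, a, fun j h1 h2 => (c j h1 h2).symm⟩
  funext k
  set ψ : (Fin (N + 1) → Fin d) → ℝ := fun v =>
    if v 0 = v k.succ ∧ ∀ j, j ≠ 0 → j ≠ k.succ → v j = 0 then 1 else 0 with hψ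
  have hray := rayleigh_le herm ψ
  have e1 : dotProduct ψ ψ = (d : ℝ) := by
    rw [dotProduct]
    rw [show ∑ v, ψ v * ψ v = ∑ m : Fin d, ψ (pat d N k m) from key_sum ψ]
    have : ∀ m : Fin d, ψ (pat d N k m) = 1 := fun m => by
      rw [hψ]
      exact if_pos ⟨by rw [pat_zero, pat_succ_self], fun j h0 hk' => pat_other h0 hk' m⟩
    simp [this]
  have e2 : dotProduct ψ (Smat d N x *ᵥ ψ)
      = (∑ l, |x l|) + |x k| * ((d:ℝ)^2 - 1) := by
    rw [dotProduct]
    rw [show ∑ v, ψ v * (Smat d N x *ᵥ ψ) v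
        = ∑ m : Fin d, (Smat d N x *ᵥ ψ) (pat d N k m) from key_sum _]
    have inner : ∀ m : Fin d, (Smat d N x *ᵥ ψ) (pat d N k m)
        = ∑ m' : Fin d, Smat d N x (pat d N k m) (pat d N k m') := fun m => by
      rw [Matrix.mulVec, dotProduct]
      rw [show ∑ w, Smat d N x (pat d N k m) w * ψ w
          = ∑ w, ψ w * Smat d N x (pat d N k m) w from
        Finset.sum_congr rfl fun w _ => mul_comm _ _]
      exact key_sum _
    rw [Finset.sum_congr rfl fun m _ => inner m]
    have hsm : ∀ m m' : Fin d, Smat d N x (pat d N k m) (pat d N k m')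
        = ∑ l, |x l| * omegaI d N l (pat d N k m) (pat d N k m') := fun m m' => by
      simp [Smat, Matrix.sum_apply]
    simp_rw [hsm]
    have hterm : ∀ m m' : Fin d,
        ∑ l, |x l| * omegaI d N l (pat d N k m) (pat d N k m')
        = |x k| + (if m = 0 ∧ m' = 0 then (∑ l, |x l|) - |x k| else 0) := by
      intro m m'
      rw [← Finset.add_sum_erase _ _ (Finset.mem_univ k), omega_pat_self, mul_one]
      congr 1
      have hcongr : ∀ l ∈ Finset.univ.erase k,
          |x l| * omegaI d N l (pat d N k m) (pat d N k m')
          = if m = 0 ∧ m' = 0 then |x l| else 0 := fun l hl => by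
        rw [omega_pat_ne (Finset.ne_of_mem_erase hl)]
        split <;> simp
      rw [Finset.sum_congr rfl hcongr]
      split_ifs with hq
      · simp [Finset.sum_erase_eq_sub (Finset.mem_univ k)]
      · simp
    rw [Finset.sum_congr rfl fun m _ => Finset.sum_congr rfl fun m' _ => hterm m m']
    have hrow : ∀ m : Fin d,
        ∑ m' : Fin d, (|x k| + if m = 0 ∧ m' = 0 then (∑ l, |x l|) - |x k| else 0)
        = (d:ℝ) * |x k| + (if m = 0 then (∑ l, |x l|) - |x k| else 0) := fun m => by
      rw [Finset.sum_add_distrib, Finset.sum_const, Finset.card_univ, Fintype.card_fin,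
        nsmul_eq_mul]
      congr 1
      by_cases hm : m = 0 <;> simp [hm]
    rw [Finset.sum_congr rfl fun m _ => hrow m, Finset.sum_add_distrib, Finset.sum_const,
      Finset.card_univ, Fintype.card_fin, nsmul_eq_mul]
    rw [show ∑ m : Fin d, (if m = 0 then (∑ l, |x l|) - |x k| else 0)
        = (∑ l, |x l|) - |x k| by simp]
    ring
  have hL : sSup (spectrum ℝ (Smat d N x)) = lamMax d N x := rfl
  rw [e1, e2, hL] at hray
  have habs : |x k| ≤ 0 := by nlinarith [abs_nonneg (x k)]
  have : x k = 0 := abs_eq_zero.mp (le_antisymm habs (abs_nonneg _))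
  simpa using this

end
end

section
/- For 1 ≤ a, b ≤ N with a ≠ b, the set Σ_{a,b} = {σ ∈ S_{N+1} : σ(0) = a and σ(b) = 0} has exactly (N−1)! elements, and ∑_{σ ∈ Σ_{a,b}} d^{#σ} = (1/d) ∑_{σ ∈ Σ_{a,a}} d^{#σ}, where #σ is the number of cycles of σ. -/
open Equiv Equiv.Perm Finset

/-- The number of disjoint cycles of a permutation, counting fixed points as
(trivial) cycles. -/
def numCycles {M : ℕ} (σ : Equiv.Perm (Fin M)) : ℕ :=
  σ.cycleType.card + (Finset.univ.filter fun x => σ x = x).card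

/-- A cycle extended by a transposition with a fresh point is still a cycle. -/
lemma isCycle_mul_swap {α : Type*} [DecidableEq α] [Fintype α]
    {c : Perm α} (hc : c.IsCycle) {z w : α} (hw : c w ≠ w) (hz : c z = z) :
    (c * Equiv.swap z w).IsCycle := by
  have hzw : z ≠ w := fun h => hw (by rw [← h, hz, h])
  set f := c * Equiv.swap z w with hf
  have hfz : f z = c w := by simp [hf, Equiv.swap_apply_left]
  have hfw : f w = z := by simp [hf, Equiv.swap_apply_right, hz]
  have hcwz : c w ≠ z := fun h => hzw (c.injective (by rw [hz, h])).symm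
  have hzfix : ∀ k : ℕ, (c ^ k) z = z := by
    intro k
    induction k with
    | zero => rfl
    | succ n ih => rw [pow_succ, Perm.mul_apply, hz, ih]
  have hpow_ne : ∀ k : ℕ, (c ^ k) (c w) ≠ z := fun k h =>
    hcwz ((c ^ k).injective (by rw [h, hzfix]))
  have key : ∀ k : ℕ, f.SameCycle (c w) ((c ^ k) (c w)) := by
    intro k
    induction k with
    | zero => exact SameCycle.refl _ _
    | succ n ih =>
      by_cases hu : (c ^ n) (c w) = w
      · rw [pow_succ', Perm.mul_apply, hu]
      · refine ih.trans ⟨1, ?_⟩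
        rw [zpow_one, hf, Perm.mul_apply,
          Equiv.swap_apply_of_ne_of_ne (hpow_ne n) hu, pow_succ', Perm.mul_apply]
  refine ⟨z, by rw [hfz]; exact fun h => hcwz h, fun y hy => ?_⟩
  by_cases hyz : y = z
  · rw [hyz]
  by_cases hyw : y = w
  · rw [hyw]
    exact Equiv.Perm.SameCycle.symm ⟨1, by rw [zpow_one, hfw]⟩
  · have hcy : c y ≠ y := by
      intro h
      exact hy (by rw [hf, Perm.mul_apply, Equiv.swap_apply_of_ne_of_ne hyz hyw, h])
    obtain ⟨i, hi⟩ := hc.exists_pow_eq hw hcy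
    rcases Nat.eq_zero_or_pos i with h0 | h0
    · exact absurd (by rw [← hi, h0, pow_zero]; rfl) hyw
    · obtain ⟨k, rfl⟩ := Nat.exists_eq_succ_of_ne_zero h0.ne'
      have : (c ^ k) (c w) = y := by
        rw [← hi, pow_succ, Perm.mul_apply]
      exact Equiv.Perm.SameCycle.trans ⟨1, by rw [zpow_one, hfz]⟩ (this ▸ key k)

lemma numCycles_mul_swap {M : ℕ} (g : Equiv.Perm (Fin M)) (z w : Fin M)
    (hz : g z = z) (hzw : w ≠ z) :
    numCycles (g * Equiv.swap z w) + 1 = numCycles g := by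
  classical
  set g' := g * Equiv.swap z w with hg'
  have hg'z : g' z = g w := by simp [hg', Equiv.swap_apply_left]
  have hg'w : g' w = z := by simp [hg', Equiv.swap_apply_right, hz]
  have hg'x : ∀ x, x ≠ z → x ≠ w → g' x = g x := fun x h1 h2 => by
    simp [hg', Equiv.swap_apply_of_ne_of_ne h1 h2]
  by_cases hw : g w = w
  · -- z, w both fixed by g: the two trivial cycles merge into one 2-cycle
    have hdisj : g.Disjoint (Equiv.swap z w) := by
      intro x
      by_cases h1 : x = z
      · exact Or.inl (h1 ▸ hz)
      by_cases h2 : x = w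
      · exact Or.inl (h2 ▸ hw)
      · exact Or.inr (Equiv.swap_apply_of_ne_of_ne h1 h2)
    have hct : g'.cycleType = g.cycleType + (Equiv.swap z w).cycleType := hdisj.cycleType_mul
    have hctsw : Multiset.card ((Equiv.swap z w).cycleType) = 1 := by
      rw [(isCycle_swap (Ne.symm hzw)).cycleType]; rfl
    have hfix : (univ.filter fun x => g' x = x)
        = ((univ.filter fun x => g x = x).erase z).erase w := by
      ext x
      simp only [mem_filter, mem_univ, true_and, mem_erase]
      by_cases h1 : x = z
      · subst h1
        simp only [hg'z]
        constructor
        · intro h; exact absurd (g.injective (h.trans hz.symm)) hzw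
        · rintro ⟨-, h, -⟩; exact absurd rfl h
      by_cases h2 : x = w
      · subst h2
        simp only [hg'w]
        constructor
        · intro h; exact absurd h.symm hzw
        · rintro ⟨h, -, -⟩; exact absurd rfl h
      · rw [hg'x x h1 h2]; tauto
    have hzmem : z ∈ univ.filter fun x => g x = x := by simp [hz]
    have hwmem : w ∈ (univ.filter fun x => g x = x).erase z := by
      simp [hw, hzw]
    have hcard : ((univ.filter fun x => g x = x).erase z).card
        = (univ.filter fun x => g x = x).card - 1 := card_erase_of_mem hzmem
    have hcard2 : (((univ.filter fun x => g x = x).erase z).erase w).card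
        = ((univ.filter fun x => g x = x).erase z).card - 1 := card_erase_of_mem hwmem
    have hpos : 1 ≤ ((univ.filter fun x => g x = x).erase z).card :=
      card_pos.mpr ⟨w, hwmem⟩
    have hpos2 : 1 ≤ (univ.filter fun x => g x = x).card := card_pos.mpr ⟨z, hzmem⟩
    simp only [numCycles, hct, hfix, Multiset.card_add, hctsw, hcard2, hcard]
    omega
  · -- w is moved by g; the cycle of w absorbs z
    set c := g.cycleOf w with hc
    have hcmem : c ∈ g.cycleFactorsFinset :=
      cycleOf_mem_cycleFactorsFinset_iff.mpr (mem_support.mpr hw)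
    have hdisj : (g * c⁻¹).Disjoint c := disjoint_mul_inv_of_mem_cycleFactorsFinset hcmem
    set h := g * c⁻¹ with hh
    have hgdec : h * c = g := inv_mul_cancel_right g c
    have hcz : c z = z := by
      rw [hc, cycleOf_apply]; split <;> simp [hz]
    have hcw : c w = g w := cycleOf_apply_self g w
    have hcycle : c.IsCycle := isCycle_cycleOf g hw
    have hcw' : c w ≠ w := by rw [hcw]; exact hw
    have hc' : (c * Equiv.swap z w).IsCycle := isCycle_mul_swap hcycle hcw' hcz
    have hhz : h z = z := by
      have : c⁻¹ z = z := c.injective (by rw [← Equiv.Perm.mul_apply, mul_inv_cancel, Equiv.Perm.one_apply, hcz])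
      rw [hh, Perm.mul_apply, this, hz]
    have hdec' : g' = h * (c * Equiv.swap z w) := by
      rw [hg', ← hgdec, mul_assoc]
    have hdisj' : h.Disjoint (c * Equiv.swap z w) := by
      intro x
      by_cases hhx : h x = x
      · exact Or.inl hhx
      · refine Or.inr ?_
        have h1 : c x = x := (hdisj x).resolve_left hhx
        have hxz : x ≠ z := fun hxz => hhx (hxz ▸ hhz)
        have hxw : x ≠ w := fun hxw => hcw' (hxw ▸ h1)
        rw [Perm.mul_apply, Equiv.swap_apply_of_ne_of_ne hxz hxw, h1]
    have hctg : Multiset.card g.cycleType = Multiset.card h.cycleType + 1 := by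
      rw [← hgdec, hdisj.cycleType_mul, Multiset.card_add, hcycle.cycleType]; rfl
    have hctg' : Multiset.card g'.cycleType = Multiset.card h.cycleType + 1 := by
      rw [hdec', hdisj'.cycleType_mul, Multiset.card_add, hc'.cycleType]; rfl
    have hgwz : g w ≠ z := fun hh => hzw (g.injective (hh.trans hz.symm))
    have hfix : (univ.filter fun x => g' x = x)
        = (univ.filter fun x => g x = x).erase z := by
      ext x
      simp only [mem_filter, mem_univ, true_and, mem_erase]
      by_cases h1 : x = z
      · subst h1
        simp only [hg'z]
        exact ⟨fun hh => absurd hh hgwz, fun hh => absurd rfl hh.1⟩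
      by_cases h2 : x = w
      · subst h2
        simp only [hg'w]
        exact ⟨fun hh => absurd hh.symm hzw, fun hh => absurd hh.2 hw⟩
      · rw [hg'x x h1 h2]
        exact ⟨fun hh => ⟨h1, hh⟩, fun hh => hh.2⟩
    have hzmem : z ∈ univ.filter fun x => g x = x := by simp [hz]
    have hcard : ((univ.filter fun x => g x = x).erase z).card
        = (univ.filter fun x => g x = x).card - 1 := card_erase_of_mem hzmem
    have hpos : 1 ≤ (univ.filter fun x => g x = x).card := card_pos.mpr ⟨z, hzmem⟩
    simp only [numCycles, hfix, hcard, hctg, hctg']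
    omega

lemma swap_mul_swap_eq {α : Type*} [DecidableEq α] {u v w : α}
    (huv : u ≠ v) (huw : u ≠ w) (hvw : v ≠ w) :
    Equiv.swap u w * Equiv.swap v w = Equiv.swap v w * Equiv.swap u v := by
  ext x
  simp only [Equiv.Perm.mul_apply, Equiv.swap_apply_def]
  split_ifs <;> simp_all

open Finset in
/-- For `a ≠ b` both nonzero, the set
`Σ_{a,b} = {σ ∈ S_{N+1} : σ 0 = a ∧ σ b = 0}` has `(N-1)!` elements, and
`∑_{σ ∈ Σ_{a,b}} d^{#σ} = (1/d) ∑_{σ ∈ Σ_{a,a}} d^{#σ}`. -/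
theorem stmt_15 (N d : ℕ) (hN : 1 ≤ N) (hd : 2 ≤ d)
    (a b : Fin (N + 1)) (ha : a ≠ 0) (hb : b ≠ 0) (hab : a ≠ b) :
    ((univ.filter fun σ : Equiv.Perm (Fin (N + 1)) => σ 0 = a ∧ σ b = 0).card
        = Nat.factorial (N - 1)) ∧
    (∑ σ ∈ univ.filter
          (fun σ : Equiv.Perm (Fin (N + 1)) => σ 0 = a ∧ σ b = 0),
        (d : ℝ) ^ numCycles σ
      = (1 / (d : ℝ)) * ∑ σ ∈ univ.filter
          (fun σ : Equiv.Perm (Fin (N + 1)) => σ 0 = a ∧ σ a = 0),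
        (d : ℝ) ^ numCycles σ) := by
  classical
  have hba : b ≠ a := fun h => hab h.symm
  have h0a : (0 : Fin (N + 1)) ≠ a := fun h => ha h.symm
  have h0b : (0 : Fin (N + 1)) ≠ b := fun h => hb h.symm
  constructor
  · -- cardinality
    set σ₀ : Equiv.Perm (Fin (N + 1)) := Equiv.swap 0 b * Equiv.swap 0 a with hσ₀
    have hσ₀0 : σ₀ 0 = a := by
      simp [hσ₀, Equiv.Perm.mul_apply, Equiv.swap_apply_left,
        Equiv.swap_apply_of_ne_of_ne ha hab]
    have hσ₀b : σ₀ b = 0 := by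
      simp [hσ₀, Equiv.Perm.mul_apply,
        Equiv.swap_apply_of_ne_of_ne hb hba, Equiv.swap_apply_right]
    have hcard1 : (univ.filter fun σ : Equiv.Perm (Fin (N + 1)) =>
          σ 0 = a ∧ σ b = 0).card
        = (univ.filter fun τ : Equiv.Perm (Fin (N + 1)) =>
          τ 0 = 0 ∧ τ b = b).card := by
      apply Finset.card_bij' (fun σ _ => σ₀⁻¹ * σ) (fun τ _ => σ₀ * τ)
      · intro σ hσ
        simp only [mem_filter, mem_univ, true_and] at hσ ⊢
        constructor
        · rw [Equiv.Perm.mul_apply, hσ.1, ← hσ₀0]; exact σ₀.symm_apply_apply 0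
        · rw [Equiv.Perm.mul_apply, hσ.2, ← hσ₀b]; exact σ₀.symm_apply_apply b
      · intro τ hτ
        simp only [mem_filter, mem_univ, true_and] at hτ ⊢
        constructor
        · rw [Equiv.Perm.mul_apply, hτ.1, hσ₀0]
        · rw [Equiv.Perm.mul_apply, hτ.2, hσ₀b]
      · intro σ _; rw [mul_inv_cancel_left]
      · intro τ _; rw [inv_mul_cancel_left]
    rw [hcard1]
    have hfc : (univ.filter fun τ : Equiv.Perm (Fin (N + 1)) =>
          τ 0 = 0 ∧ τ b = b).card
        = Fintype.card {f : Equiv.Perm (Fin (N + 1)) //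
            ∀ x, ¬(x ≠ 0 ∧ x ≠ b) → f x = x} := by
      rw [Fintype.card_subtype]
      congr 1
      apply Finset.filter_congr
      intro τ _
      constructor
      · rintro ⟨h1, h2⟩ x hx
        rcases not_and_or.mp hx with hx | hx
        · rw [not_not.mp hx]; exact h1
        · rw [not_not.mp hx]; exact h2
      · intro h
        exact ⟨h 0 (by simp), h b (by simp)⟩
    rw [hfc, ← Fintype.card_congr
      (Equiv.Perm.subtypeEquivSubtypePerm (fun x : Fin (N + 1) => x ≠ 0 ∧ x ≠ b)),
      Fintype.card_perm]
    congr 1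
    rw [Fintype.card_subtype]
    have : (univ.filter fun x : Fin (N + 1) => x ≠ 0 ∧ x ≠ b)
        = univ \ {0, b} := by
      ext x; simp [not_or]
    rw [this, card_sdiff_of_subset (by simp), card_univ, Fintype.card_fin]
    rw [Finset.card_insert_of_notMem (by simpa using h0b), Finset.card_singleton]
    omega
  · -- sum identity
    have hstep : ∀ σ : Equiv.Perm (Fin (N + 1)), σ 0 = a → σ b = 0 →
        numCycles (σ * Equiv.swap a b) = numCycles σ + 1 := by
      intro σ h0 hbσ
      have hη0 : (σ * Equiv.swap 0 b) 0 = 0 := by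
        rw [Equiv.Perm.mul_apply, Equiv.swap_apply_left, hbσ]
      have A1 := numCycles_mul_swap (σ * Equiv.swap 0 b) 0 b hη0 hb
      rw [mul_assoc, Equiv.swap_mul_self, mul_one] at A1
      set g := σ * Equiv.swap 0 b * Equiv.swap a b with hg
      have hga : g a = a := by
        rw [hg, Equiv.Perm.mul_apply, Equiv.swap_apply_left,
          Equiv.Perm.mul_apply, Equiv.swap_apply_right, h0]
      have A2 := numCycles_mul_swap g a b hga hba
      have hg2 : g * Equiv.swap a b = σ * Equiv.swap 0 b := by
        rw [hg, mul_assoc, Equiv.swap_mul_self, mul_one]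
      rw [hg2] at A2
      have hgτ : g = σ * Equiv.swap a b * Equiv.swap 0 a := by
        rw [hg, mul_assoc, mul_assoc, swap_mul_swap_eq h0a h0b hab]
      have hg0 : g 0 = 0 := by
        rw [hgτ, Equiv.Perm.mul_apply, Equiv.swap_apply_left,
          Equiv.Perm.mul_apply, Equiv.swap_apply_left, hbσ]
      have A3 := numCycles_mul_swap g 0 a hg0 ha
      have hg3 : g * Equiv.swap 0 a = σ * Equiv.swap a b := by
        rw [hgτ, mul_assoc, Equiv.swap_mul_self, mul_one]
      rw [hg3] at A3
      omega
    have hsum : ∑ σ ∈ univ.filter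
          (fun σ : Equiv.Perm (Fin (N + 1)) => σ 0 = a ∧ σ a = 0),
        (d : ℝ) ^ numCycles σ
        = ∑ σ ∈ univ.filter
          (fun σ : Equiv.Perm (Fin (N + 1)) => σ 0 = a ∧ σ b = 0),
        (d : ℝ) ^ (numCycles σ + 1) := by
      refine (Finset.sum_equiv (Equiv.mulRight (Equiv.swap a b)) ?_ ?_).symm
      · intro σ
        simp only [mem_filter, mem_univ, true_and, Equiv.coe_mulRight]
        rw [Equiv.Perm.mul_apply, Equiv.Perm.mul_apply,
          Equiv.swap_apply_of_ne_of_ne h0a h0b, Equiv.swap_apply_left]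
      · intro σ hσ
        simp only [mem_filter, mem_univ, true_and] at hσ
        simp only [Equiv.coe_mulRight]
        rw [hstep σ hσ.1 hσ.2]
    rw [hsum, Finset.mul_sum]
    have hd0 : (d : ℝ) ≠ 0 := by positivity
    refine Finset.sum_congr rfl fun σ _ => ?_
    rw [pow_succ, one_div, mul_comm ((d : ℝ)⁻¹), mul_assoc,
      mul_inv_cancel₀ hd0, mul_one]
end
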